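/- A path-connected topological space X admits a continuous global motion planning algorithm (i.e., the evaluation map e : PX → X × X, e(γ) = (γ(0), γ(1)), admits a continuous section) if and only if X is contractible. -/

import Mathlib

open unitInterval

/-- A path-connected space admits a continuous global motion planning algorithm
(a continuous section of the evaluation map `γ ↦ (γ 0, γ 1)`) iff it is contractible. -/
theorem global_section_iff_contractible {X : Type*} [TopologicalSpace X]
    [PathConnectedSpace X] :
    (∃ s : C(X × X, C(I, X)), ∀ p : X × X, s p 0 = p.1 ∧ s p 1 = p.2) ↔
      ContractibleSpace X := by
  constructor
  · rintro ⟨s, hs⟩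
    obtain ⟨x₀⟩ : Nonempty X := inferInstance
    rw [contractible_iff_id_nullhomotopic]
    refine ⟨x₀, ⟨⟨⟨fun p => s (p.2, x₀) p.1, ?_⟩, ?_, ?_⟩⟩⟩
    · exact continuous_eval.comp
        ((s.continuous.comp (by fun_prop)).prodMk continuous_fst)
    · intro x; simpa using (hs (x, x₀)).1
    · intro x; simpa using (hs (x, x₀)).2
  · intro h
    obtain ⟨x₀, ⟨H⟩⟩ := (contractible_iff_id_nullhomotopic X).mp h
    have hc : Continuous fun q : (X × X) × I =>
        if (q.2 : ℝ) ≤ 1/2 then H (Set.projIcc 0 1 zero_le_one (2 * q.2), q.1.1)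
        else H (Set.projIcc 0 1 zero_le_one (2 - 2 * q.2), q.1.2) := by
      apply Continuous.if_le
      · exact H.continuous.comp ((continuous_projIcc.comp (by fun_prop)).prodMk (by fun_prop))
      · exact H.continuous.comp ((continuous_projIcc.comp (by fun_prop)).prodMk (by fun_prop))
      · fun_prop
      · fun_prop
      · intro q hq
        have h1 : (2 : ℝ) * q.2 = 1 := by rw [hq]; ring
        have h2 : (2 : ℝ) - 2 * q.2 = 1 := by rw [hq]; ring
        rw [h1]
        have h3 : (2:ℝ) - 1 = 1 := by norm_num
        rw [h3]
        simp only [Set.projIcc_right]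
        have e1 := H.map_one_left q.1.1
        have e2 := H.map_one_left q.1.2
        simp only [ContinuousMap.const_apply] at e1 e2
        calc H (1, q.1.1) = x₀ := by simpa using e1
          _ = H (1, q.1.2) := by simpa using e2.symm
    refine ⟨(ContinuousMap.mk _ hc).curry, fun p => ⟨?_, ?_⟩⟩
    · show (if ((0:I) : ℝ) ≤ 1/2 then H (Set.projIcc 0 1 zero_le_one (2 * ((0:I):ℝ)), p.1)
        else H (Set.projIcc 0 1 zero_le_one (2 - 2 * ((0:I):ℝ)), p.2)) = p.1
      rw [if_pos (by norm_num)]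
      norm_num
    · show (if ((1:I) : ℝ) ≤ 1/2 then H (Set.projIcc 0 1 zero_le_one (2 * ((1:I):ℝ)), p.1)
        else H (Set.projIcc 0 1 zero_le_one (2 - 2 * ((1:I):ℝ)), p.2)) = p.2
      rw [if_neg (by norm_num)]
      norm_num
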